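/- Let M₁ and M₂ be symmetric n×n matrices with zero diagonal over a commutative ring. Then Σ_{i=1}^n [[M₁, e_i], [M₂, e_i]] = -[M₁, M₂] and Σ_{i=1}^n [[[M₁, e_i], M₂], e_i] = [M₁, M₂]. -/

import Mathlib

/-- Commutator of matrices. -/
def mbr {n : ℕ} {R : Type*} [Ring R] (A B : Matrix (Fin n) (Fin n) R) :
    Matrix (Fin n) (Fin n) R :=
  A * B - B * A

/-- The diagonal matrix unit `e_k` with a single `1` at position `(k,k)`. -/
def eMat {n : ℕ} (R : Type*) [Semiring R] (k : Fin n) : Matrix (Fin n) (Fin n) R :=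
  Matrix.single k k 1

theorem stmt_3 {n : ℕ} {R : Type*} [CommRing R] (M₁ M₂ : Matrix (Fin n) (Fin n) R)
    (h₁sym : M₁.transpose = M₁) (h₂sym : M₂.transpose = M₂)
    (h₁diag : ∀ i, M₁ i i = 0) (h₂diag : ∀ i, M₂ i i = 0) :
    (∑ i : Fin n, mbr (mbr M₁ (eMat R i)) (mbr M₂ (eMat R i)) = -(mbr M₁ M₂)) ∧
    (∑ i : Fin n, mbr (mbr (mbr M₁ (eMat R i)) M₂) (eMat R i) = mbr M₁ M₂) := by
  have hs1 : ∀ i j, M₁ i j = M₁ j i := fun i j => by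
    conv_lhs => rw [← h₁sym, Matrix.transpose_apply]
  have hs2 : ∀ i j, M₂ i j = M₂ j i := fun i j => by
    conv_lhs => rw [← h₂sym, Matrix.transpose_apply]
  have hdiag : ∀ b : Fin n, ∑ x, M₁ b x * M₂ x b = ∑ x, M₂ b x * M₁ x b := by
    intro b
    refine Finset.sum_congr rfl fun x _ => ?_
    rw [hs1 b x, hs2 x b]; ring
  constructor <;>
  · ext a b
    simp [mbr, eMat, Matrix.sum_apply, Matrix.mul_apply, Matrix.single, ite_and,
      Finset.mul_sum, Finset.sum_mul, mul_ite, ite_mul, Finset.sum_sub_distrib,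
      Finset.sum_ite_eq, Finset.sum_ite_eq', h₁diag, h₂diag, sub_mul, mul_sub]
    rcases eq_or_ne b a with rfl | h
    · simp [hdiag]
      try ring
    · simp [h]
      try ring
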